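/- Let α > 0 and let u : ℝ → ℝ be of class C². Define τ(g) = 4t/N(g)², ψ(g) = (|x|²+|y|²)/N(g)², and v(g) = N(g)^α · u(τ(g)). Then for every g = (x,y,t) with (x,y) ≠ 0 one has ℒ₀v(g) = 4·ψ(g)·N(g)^(α−2)·[ (1−τ(g)²)·u''(τ(g)) − (n+1)·τ(g)·u'(τ(g)) + (α(α+2n)/4)·u(τ(g)) ]. -/

import Mathlib

open MeasureTheory Filter
open scoped BigOperators ENNReal Topology NNReal

noncomputable section

abbrev Hpt (n : ℕ) : Type := (Fin n → ℝ) × (Fin n → ℝ) × ℝ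

namespace Heis

variable {n : ℕ}

/-- squared Euclidean norm of a vector in `ℝⁿ`. -/
def sqn (x : Fin n → ℝ) : ℝ := ∑ i, (x i) ^ 2

/-- The Korányi gauge `N(x,y,t) = ((|x|²+|y|²)² + 16 t²)^(1/4)`. -/
def gaugeN (g : Hpt n) : ℝ :=
  ((sqn g.1 + sqn g.2.1) ^ 2 + 16 * g.2.2 ^ 2) ^ ((1 : ℝ) / 4)

/-- Heisenberg group multiplication. -/
def hMul (g g' : Hpt n) : Hpt n :=
  (g.1 + g'.1, g.2.1 + g'.2.1,
    g.2.2 + g'.2.2 + (1 / 2) * ((∑ i, g.1 i * g'.2.1 i) - ∑ i, g.2.1 i * g'.1 i))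

/-- Heisenberg group inverse. -/
def hInv (g : Hpt n) : Hpt n := (-g.1, -g.2.1, -g.2.2)

/-- The gauge distance `ρ(g,g') = N(g⁻¹ ⬝ g')`. -/
def rho (g g' : Hpt n) : ℝ := gaugeN (hMul (hInv g) g')

/-- The gauge ball. -/
def ballRho (g : Hpt n) (r : ℝ) : Set (Hpt n) := {g' | rho g g' < r}

/-- The coefficient vector at `g` of the horizontal vector field `X_j`
(`X_j = ∂_{x_j} - (y_j/2) ∂_t` and `X_{n+j} = ∂_{y_j} + (x_j/2) ∂_t`). -/
def Xvec (j : Fin n ⊕ Fin n) (g : Hpt n) : Hpt n :=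
  match j with
  | Sum.inl i => (Pi.single i 1, 0, -(g.2.1 i) / 2)
  | Sum.inr i => (0, Pi.single i 1, (g.1 i) / 2)

/-- The derivative `X_j u` of `u` along the horizontal vector field `X_j`. -/
def Xd (j : Fin n ⊕ Fin n) (u : Hpt n → ℝ) (g : Hpt n) : ℝ :=
  fderiv ℝ u g (Xvec j g)

/-- The sub-Laplacian `ℒ₀ u = ∑ X_j² u`. -/
def subLap (u : Hpt n → ℝ) (g : Hpt n) : ℝ :=
  ∑ j : Fin n ⊕ Fin n, Xd j (Xd j u) g

/-- Length of the horizontal gradient `|∇_H u|`. -/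
def hGradNorm (u : Hpt n → ℝ) (g : Hpt n) : ℝ :=
  Real.sqrt (∑ j : Fin n ⊕ Fin n, (Xd j u g) ^ 2)


end Heis

open Heis

namespace Stmt4Aux

variable {n : ℕ}




lemma sqn_nonneg (x : Fin n → ℝ) : 0 ≤ sqn x := Finset.sum_nonneg fun i _ => sq_nonneg _

lemma sqn_eq_zero {x : Fin n → ℝ} (h : sqn x = 0) : x = 0 := by
  funext i
  have := (Finset.sum_eq_zero_iff_of_nonneg (fun i _ => sq_nonneg (x i))).mp h i (Finset.mem_univ i)
  simpa using pow_eq_zero_iff (n := 2) (by norm_num) |>.mp this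

lemma sqn_add_single (x : Fin n → ℝ) (i : Fin n) (ε : ℝ) :
    sqn (x + ε • (Pi.single i 1 : Fin n → ℝ)) = sqn x + 2 * x i * ε + ε ^ 2 := by
  unfold sqn
  have h : ∀ k, (x + ε • (Pi.single i 1 : Fin n → ℝ)) k ^ 2
      = x k ^ 2 + (if k = i then 2 * x i * ε + ε ^ 2 else 0) := by
    intro k
    by_cases hk : k = i
    · subst hk; simp [Pi.single_apply]; ring
    · simp [Pi.single_apply, hk]
  simp_rw [h]
  rw [Finset.sum_add_distrib, Finset.sum_ite_eq' Finset.univ i (fun _ => 2 * x i * ε + ε ^ 2)]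
  simp [add_assoc]

lemma sqn_add_zero (x : Fin n → ℝ) (ε : ℝ) : sqn (x + ε • (0 : Fin n → ℝ)) = sqn x := by
  simp

lemma fderiv_line {f : Hpt n → ℝ} {g0 vec : Hpt n} {D : ℝ}
    (hf : DifferentiableAt ℝ f g0)
    (hD : HasDerivAt (fun ε : ℝ => f (g0 + ε • vec)) D 0) :
    fderiv ℝ f g0 vec = D := by
  have h1 : HasDerivAt (fun ε : ℝ => g0 + ε • vec) vec 0 := by
    simpa using ((hasDerivAt_id (0:ℝ)).smul_const vec).const_add g0
  have h0 : HasFDerivAt f (fderiv ℝ f g0) (g0 + (0:ℝ) • vec) := by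
    simpa using hf.hasFDerivAt
  have h2 : HasDerivAt (fun ε : ℝ => f (g0 + ε • vec)) (fderiv ℝ f g0 vec) 0 :=
    (h0.comp_hasDerivAt 0 h1)
  exact h2.unique hD

lemma hasDerivAt_block {c : ℝ} {z : ℝ → ℝ} {z' : ℝ} {σ θ : ℝ → ℝ} {σ' θ' a b e : ℝ}
    (hσ : HasDerivAt σ σ' e) (hθ : HasDerivAt θ θ' e)
    (ha : σ e = a) (hb : θ e = b)
    (hA : a ^ 2 + 16 * b ^ 2 ≠ 0)
    (hz : HasDerivAt z z' (4 * b * (a ^ 2 + 16 * b ^ 2) ^ (-(1:ℝ)/2))) :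
    HasDerivAt (fun ε => (σ ε ^ 2 + 16 * θ ε ^ 2) ^ c *
        z (4 * θ ε * (σ ε ^ 2 + 16 * θ ε ^ 2) ^ (-(1:ℝ)/2)))
      (c * (a^2+16*b^2) ^ (c-1) * (2*a*σ' + 32*b*θ') * z (4*b*(a^2+16*b^2) ^ (-(1:ℝ)/2))
       + (a^2+16*b^2) ^ c * (z' * (4*θ' * (a^2+16*b^2) ^ (-(1:ℝ)/2)
          + 4*b*((-(1:ℝ)/2) * (a^2+16*b^2) ^ (-(1:ℝ)/2-1) * (2*a*σ' + 32*b*θ'))))) e := by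
  subst ha hb
  have hA1 : HasDerivAt (fun ε => σ ε ^ 2 + 16 * θ ε ^ 2)
      (2 * σ e * σ' + 32 * θ e * θ') e := by
    have h := (hσ.pow 2).add ((hθ.pow 2).const_mul 16)
    exact h.congr_deriv (by push_cast; ring)
  have hr : HasDerivAt (fun ε => (σ ε ^ 2 + 16 * θ ε ^ 2) ^ c)
      (c * (σ e ^ 2 + 16 * θ e ^ 2) ^ (c-1) * (2 * σ e * σ' + 32 * θ e * θ')) e := by
    have h := (Real.hasDerivAt_rpow_const (x := σ e ^ 2 + 16 * θ e ^ 2) (p := c)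
      (Or.inl hA)).comp e hA1
    exact h
  have hτ : HasDerivAt (fun ε => 4 * θ ε * (σ ε ^ 2 + 16 * θ ε ^ 2) ^ (-(1:ℝ)/2))
      (4 * θ' * (σ e ^ 2 + 16 * θ e ^ 2) ^ (-(1:ℝ)/2)
        + 4 * θ e * ((-(1:ℝ)/2) * (σ e ^ 2 + 16 * θ e ^ 2) ^ (-(1:ℝ)/2-1)
            * (2 * σ e * σ' + 32 * θ e * θ'))) e := by
    have h2 := (Real.hasDerivAt_rpow_const (x := σ e ^ 2 + 16 * θ e ^ 2) (p := -(1:ℝ)/2)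
      (Or.inl hA)).comp e hA1
    exact (hθ.const_mul 4).mul h2
  have hz2 := hz.comp e hτ
  have h := hr.mul hz2
  exact h




def Sf (h : Hpt n) : ℝ := sqn h.1 + sqn h.2.1
def Af (h : Hpt n) : ℝ := Sf h ^ 2 + 16 * h.2.2 ^ 2
def tH (h : Hpt n) : ℝ := 4 * h.2.2 * Af h ^ (-(1:ℝ)/2)
def blk (c : ℝ) (z : ℝ → ℝ) (h : Hpt n) : ℝ := Af h ^ c * z (tH h)

def DS : Fin n ⊕ Fin n → Hpt n → ℝ
  | .inl i, h => 2 * h.1 i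
  | .inr i, h => 2 * h.2.1 i

def DT : Fin n ⊕ Fin n → Hpt n → ℝ
  | .inl i, h => -h.2.1 i / 2
  | .inr i, h => h.1 i / 2

lemma line_S (j : Fin n ⊕ Fin n) (h : Hpt n) (ε : ℝ) :
    Sf (h + ε • Xvec j h) = Sf h + DS j h * ε + ε ^ 2 := by
  cases j with
  | inl i =>
      simp only [Sf, Xvec, DS, Prod.fst_add, Prod.snd_add, Prod.smul_fst, Prod.smul_snd,
        smul_zero, add_zero, sqn_add_single]
      ring
  | inr i =>
      simp only [Sf, Xvec, DS, Prod.fst_add, Prod.snd_add, Prod.smul_fst, Prod.smul_snd,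
        smul_zero, add_zero, sqn_add_single]
      ring

lemma line_T (j : Fin n ⊕ Fin n) (h : Hpt n) (ε : ℝ) :
    (h + ε • Xvec j h).2.2 = h.2.2 + DT j h * ε := by
  cases j <;>
    simp only [Xvec, DT, Prod.snd_add, Prod.smul_snd, smul_eq_mul] <;> ring

lemma line_DS (j : Fin n ⊕ Fin n) (h : Hpt n) (ε : ℝ) :
    DS j (h + ε • Xvec j h) = DS j h + 2 * ε := by
  cases j <;>
    simp only [Xvec, DS, Prod.fst_add, Prod.snd_add, Prod.smul_fst, Prod.smul_snd,
      Pi.add_apply, Pi.smul_apply, Pi.single_eq_same, smul_eq_mul] <;> ring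

lemma line_DT (j : Fin n ⊕ Fin n) (h : Hpt n) (ε : ℝ) :
    DT j (h + ε • Xvec j h) = DT j h := by
  cases j <;>
    simp only [Xvec, DT, Prod.fst_add, Prod.snd_add, Prod.smul_fst, Prod.smul_snd,
      smul_zero, add_zero, Pi.add_apply, Pi.smul_apply, smul_eq_mul, Pi.zero_apply]

lemma diff_Sf : Differentiable ℝ (Sf : Hpt n → ℝ) := by
  unfold Sf sqn
  fun_prop

lemma diff_T : Differentiable ℝ (fun h : Hpt n => h.2.2) := by fun_prop

lemma diff_Af : Differentiable ℝ (Af : Hpt n → ℝ) := by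
  unfold Af
  exact (diff_Sf.pow 2).add ((diff_T.pow 2).const_mul 16)

lemma diffAt_tH {h : Hpt n} (hA : Af h ≠ 0) : DifferentiableAt ℝ (tH : Hpt n → ℝ) h := by
  unfold tH
  exact ((diff_T.differentiableAt).const_mul 4).mul
    ((diff_Af.differentiableAt).rpow_const (Or.inl hA))

lemma diffAt_blk {c : ℝ} {z : ℝ → ℝ} (hz : Differentiable ℝ z) {h : Hpt n}
    (hA : Af h ≠ 0) : DifferentiableAt ℝ (blk c z) h := by
  unfold blk
  exact ((diff_Af.differentiableAt).rpow_const (Or.inl hA)).mul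
    ((hz (tH h)).comp h (diffAt_tH hA))

lemma hasDerivAt_lin (A B : ℝ) : HasDerivAt (fun ε : ℝ => A + B * ε) B 0 := by
  simpa using ((hasDerivAt_id (0:ℝ)).const_mul B).const_add A

lemma hasDerivAt_quad (A B : ℝ) : HasDerivAt (fun ε : ℝ => A + B * ε + ε ^ 2) B 0 := by
  have h2 : HasDerivAt (fun ε : ℝ => ε ^ 2) 0 0 := by simpa using hasDerivAt_pow 2 (0:ℝ)
  exact ((hasDerivAt_lin A B).add h2).congr_deriv (add_zero B)

lemma Af_pos {h : Hpt n} (hS : 0 < Sf h) : 0 < Af h := by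
  have h1 : 0 < Sf h ^ 2 := pow_pos hS 2
  have h2 : (0:ℝ) ≤ h.2.2 ^ 2 := sq_nonneg _
  unfold Af; nlinarith

lemma Af_nonneg (h : Hpt n) : 0 ≤ Af h := by
  unfold Af; positivity

lemma gauge_sq (h : Hpt n) : gaugeN h ^ (2:ℕ) = Af h ^ ((1:ℝ)/2) := by
  have h0 : (0:ℝ) ≤ Af h := Af_nonneg h
  rw [show gaugeN h = Af h ^ ((1:ℝ)/4) from rfl,
    ← Real.rpow_natCast (Af h ^ ((1:ℝ)/4)) 2, ← Real.rpow_mul h0]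
  norm_num

lemma gauge_rpow (r : ℝ) (h : Hpt n) : gaugeN h ^ r = Af h ^ (r/4) := by
  have h0 : (0:ℝ) ≤ Af h := Af_nonneg h
  rw [show gaugeN h = Af h ^ ((1:ℝ)/4) from rfl, ← Real.rpow_mul h0]
  congr 1; ring

lemma arg_eq (h : Hpt n) : 4 * h.2.2 / gaugeN h ^ 2 = tH h := by
  have h0 : (0:ℝ) ≤ Af h := Af_nonneg h
  rw [gauge_sq, div_eq_mul_inv, ← Real.rpow_neg h0]
  unfold tH
  norm_num

lemma v_eq (α : ℝ) (u : ℝ → ℝ) (h : Hpt n) :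
    gaugeN h ^ α * u (4 * h.2.2 / gaugeN h ^ 2) = Af h ^ (α/4) * u (tH h) := by
  rw [gauge_rpow, arg_eq]

lemma stage1 (α : ℝ) (u : ℝ → ℝ) (hu0 : Differentiable ℝ u) (j : Fin n ⊕ Fin n)
    (h : Hpt n) (hS : 0 < Sf h) :
    Xd j (fun h' => Af h' ^ (α/4) * u (tH h')) h
      = α/2 * Sf h * DS j h * blk (α/4-1) u h + 8*α*h.2.2*DT j h * blk (α/4-1) u h
        + 4 * DT j h * blk (α/4-1/2) (deriv u) h
        - 4 * Sf h * h.2.2 * DS j h * blk (α/4-3/2) (deriv u) h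
        - 64 * h.2.2^2 * DT j h * blk (α/4-3/2) (deriv u) h := by
  have hA : 0 < Af h := Af_pos hS
  have hA' : Sf h ^ 2 + 16 * h.2.2 ^ 2 ≠ 0 := by
    have := hA; unfold Af at this; exact ne_of_gt this
  unfold Xd
  apply fderiv_line
  · exact ((diff_Af.differentiableAt).rpow_const (Or.inl hA.ne')).mul
      ((hu0 (tH h)).comp h (diffAt_tH hA.ne'))
  · have hfun : (fun ε : ℝ => (fun h' => Af h' ^ (α/4) * u (tH h')) (h + ε • Xvec j h))
        = (fun ε : ℝ =>
            ((Sf h + DS j h * ε + ε ^ 2) ^ 2 + 16 * (h.2.2 + DT j h * ε) ^ 2) ^ (α/4) *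
            u (4 * (h.2.2 + DT j h * ε) *
              ((Sf h + DS j h * ε + ε ^ 2) ^ 2 + 16 * (h.2.2 + DT j h * ε) ^ 2) ^ (-(1:ℝ)/2))) := by
      funext ε
      simp only [Af, tH, line_S, line_T]
    rw [hfun]
    have hσ : HasDerivAt (fun ε : ℝ => Sf h + DS j h * ε + ε ^ 2) (DS j h) 0 :=
      hasDerivAt_quad _ _
    have hθ : HasDerivAt (fun ε : ℝ => h.2.2 + DT j h * ε) (DT j h) 0 :=
      hasDerivAt_lin _ _
    have ha : (fun ε : ℝ => Sf h + DS j h * ε + ε ^ 2) 0 = Sf h := by norm_num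
    have hb : (fun ε : ℝ => h.2.2 + DT j h * ε) 0 = h.2.2 := by norm_num
    have hz : HasDerivAt u (deriv u (4 * h.2.2 * (Sf h ^ 2 + 16 * h.2.2 ^ 2) ^ (-(1:ℝ)/2)))
        (4 * h.2.2 * (Sf h ^ 2 + 16 * h.2.2 ^ 2) ^ (-(1:ℝ)/2)) :=
      (hu0 _).hasDerivAt
    have key := hasDerivAt_block (c := α/4) hσ hθ ha hb hA' hz
    convert key using 1
    simp only [blk, Af, tH]
    rw [show (α/4-1/2 : ℝ) = α/4 + (-(1:ℝ)/2) by ring,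
        show (α/4-3/2 : ℝ) = α/4 + (-(1:ℝ)/2-1) by ring,
        Real.rpow_add (by exact lt_of_le_of_ne (by positivity) (Ne.symm hA')),
        Real.rpow_add (by exact lt_of_le_of_ne (by positivity) (Ne.symm hA'))]
    ring

def Ef (α : ℝ) (u : ℝ → ℝ) (j : Fin n ⊕ Fin n) (h : Hpt n) : ℝ :=
  α/2 * Sf h * DS j h * blk (α/4-1) u h + 8*α*h.2.2*DT j h * blk (α/4-1) u h
  + 4 * DT j h * blk (α/4-1/2) (deriv u) h
  - 4 * Sf h * h.2.2 * DS j h * blk (α/4-3/2) (deriv u) h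
  - 64 * h.2.2^2 * DT j h * blk (α/4-3/2) (deriv u) h

def blkD (c : ℝ) (zv z'v : ℝ) (g : Hpt n) (d e : ℝ) : ℝ :=
  c * Af g ^ (c-1) * (2*Sf g*d + 32*g.2.2*e) * zv
  + Af g ^ c * (z'v * (4*e*Af g ^ (-(1:ℝ)/2)
      + 4*g.2.2*((-(1:ℝ)/2) * Af g ^ (-(1:ℝ)/2-1) * (2*Sf g*d + 32*g.2.2*e))))

def Ffun (α : ℝ) (u : ℝ → ℝ) (g : Hpt n) (d e : ℝ) : ℝ :=
  α/2*(d*d*blk (α/4-1) u g + Sf g*2*blk (α/4-1) u g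
      + Sf g*d*blkD (α/4-1) (u (tH g)) (deriv u (tH g)) g d e)
  + 8*α*(e*e*blk (α/4-1) u g + g.2.2*e*blkD (α/4-1) (u (tH g)) (deriv u (tH g)) g d e)
  + 4*e*blkD (α/4-1/2) (deriv u (tH g)) (deriv (deriv u) (tH g)) g d e
  - 4*(g.2.2*d*d*blk (α/4-3/2) (deriv u) g + Sf g*e*d*blk (α/4-3/2) (deriv u) g
      + Sf g*g.2.2*2*blk (α/4-3/2) (deriv u) g
      + Sf g*g.2.2*d*blkD (α/4-3/2) (deriv u (tH g)) (deriv (deriv u) (tH g)) g d e)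
  - 64*(2*g.2.2*e*e*blk (α/4-3/2) (deriv u) g
      + g.2.2^2*e*blkD (α/4-3/2) (deriv u (tH g)) (deriv (deriv u) (tH g)) g d e)

lemma diff_DS (j : Fin n ⊕ Fin n) : Differentiable ℝ (DS j : Hpt n → ℝ) := by
  cases j <;> unfold DS <;> fun_prop

lemma diff_DT (j : Fin n ⊕ Fin n) : Differentiable ℝ (DT j : Hpt n → ℝ) := by
  cases j <;> unfold DT <;> fun_prop

lemma stage2 (α : ℝ) (u : ℝ → ℝ) (hu0 : Differentiable ℝ u) (hu1 : Differentiable ℝ (deriv u))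
    (j : Fin n ⊕ Fin n) (g : Hpt n) (hS : 0 < Sf g) :
    fderiv ℝ (Ef α u j) g (Xvec j g) = Ffun α u g (DS j g) (DT j g) := by
  have hA : 0 < Af g := Af_pos hS
  have hA' : Sf g ^ 2 + 16 * g.2.2 ^ 2 ≠ 0 := by
    have := hA; unfold Af at this; exact ne_of_gt this
  apply fderiv_line
  · have b1 : DifferentiableAt ℝ (blk (α/4-1) u) g := diffAt_blk hu0 hA.ne'
    have b2 : DifferentiableAt ℝ (blk (α/4-1/2) (deriv u)) g := diffAt_blk hu1 hA.ne'
    have b3 : DifferentiableAt ℝ (blk (α/4-3/2) (deriv u)) g := diffAt_blk hu1 hA.ne'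
    have dS := diff_Sf.differentiableAt (x := g)
    have dT := diff_T.differentiableAt (x := g)
    have dDS := (diff_DS j).differentiableAt (x := g)
    have dDT := (diff_DT j).differentiableAt (x := g)
    unfold Ef
    exact (((((dS.const_mul (α/2)).mul dDS).mul b1).add
        (((dT.const_mul (8*α)).mul dDT).mul b1)).add
        ((dDT.const_mul 4).mul b2)).sub
        ((((dS.const_mul 4).mul dT).mul dDS).mul b3) |>.sub
        (((dT.pow 2 |>.const_mul 64).mul dDT).mul b3)
  · have hfun : (fun ε : ℝ => Ef α u j (g + ε • Xvec j g))
        = (fun ε : ℝ =>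
          α/2 * (Sf g + DS j g * ε + ε ^ 2) * (DS j g + 2 * ε) *
            (((Sf g + DS j g * ε + ε ^ 2) ^ 2 + 16 * (g.2.2 + DT j g * ε) ^ 2) ^ (α/4-1) *
              u (4 * (g.2.2 + DT j g * ε) *
                ((Sf g + DS j g * ε + ε ^ 2) ^ 2 + 16 * (g.2.2 + DT j g * ε) ^ 2) ^ (-(1:ℝ)/2)))
          + 8*α*(g.2.2 + DT j g * ε)*DT j g *
            (((Sf g + DS j g * ε + ε ^ 2) ^ 2 + 16 * (g.2.2 + DT j g * ε) ^ 2) ^ (α/4-1) *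
              u (4 * (g.2.2 + DT j g * ε) *
                ((Sf g + DS j g * ε + ε ^ 2) ^ 2 + 16 * (g.2.2 + DT j g * ε) ^ 2) ^ (-(1:ℝ)/2)))
          + 4 * DT j g *
            (((Sf g + DS j g * ε + ε ^ 2) ^ 2 + 16 * (g.2.2 + DT j g * ε) ^ 2) ^ (α/4-1/2) *
              deriv u (4 * (g.2.2 + DT j g * ε) *
                ((Sf g + DS j g * ε + ε ^ 2) ^ 2 + 16 * (g.2.2 + DT j g * ε) ^ 2) ^ (-(1:ℝ)/2)))
          - 4 * (Sf g + DS j g * ε + ε ^ 2) * (g.2.2 + DT j g * ε) * (DS j g + 2 * ε) *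
            (((Sf g + DS j g * ε + ε ^ 2) ^ 2 + 16 * (g.2.2 + DT j g * ε) ^ 2) ^ (α/4-3/2) *
              deriv u (4 * (g.2.2 + DT j g * ε) *
                ((Sf g + DS j g * ε + ε ^ 2) ^ 2 + 16 * (g.2.2 + DT j g * ε) ^ 2) ^ (-(1:ℝ)/2)))
          - 64 * (g.2.2 + DT j g * ε) ^ 2 * DT j g *
            (((Sf g + DS j g * ε + ε ^ 2) ^ 2 + 16 * (g.2.2 + DT j g * ε) ^ 2) ^ (α/4-3/2) *
              deriv u (4 * (g.2.2 + DT j g * ε) *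
                ((Sf g + DS j g * ε + ε ^ 2) ^ 2 + 16 * (g.2.2 + DT j g * ε) ^ 2) ^ (-(1:ℝ)/2)))) := by
      funext ε
      simp only [Ef, blk, Af, tH, line_S, line_T, line_DS, line_DT]
    rw [hfun]
    have hσ : HasDerivAt (fun ε : ℝ => Sf g + DS j g * ε + ε ^ 2) (DS j g) 0 :=
      hasDerivAt_quad _ _
    have hθ : HasDerivAt (fun ε : ℝ => g.2.2 + DT j g * ε) (DT j g) 0 :=
      hasDerivAt_lin _ _
    have hd : HasDerivAt (fun ε : ℝ => DS j g + 2 * ε) 2 0 := hasDerivAt_lin _ _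
    have ha : (fun ε : ℝ => Sf g + DS j g * ε + ε ^ 2) 0 = Sf g := by norm_num
    have hb : (fun ε : ℝ => g.2.2 + DT j g * ε) 0 = g.2.2 := by norm_num
    have hz1 : HasDerivAt u (deriv u (4 * g.2.2 * (Sf g ^ 2 + 16 * g.2.2 ^ 2) ^ (-(1:ℝ)/2)))
        (4 * g.2.2 * (Sf g ^ 2 + 16 * g.2.2 ^ 2) ^ (-(1:ℝ)/2)) := (hu0 _).hasDerivAt
    have hz2 : HasDerivAt (deriv u)
        (deriv (deriv u) (4 * g.2.2 * (Sf g ^ 2 + 16 * g.2.2 ^ 2) ^ (-(1:ℝ)/2)))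
        (4 * g.2.2 * (Sf g ^ 2 + 16 * g.2.2 ^ 2) ^ (-(1:ℝ)/2)) := (hu1 _).hasDerivAt
    have hB1 := hasDerivAt_block (c := α/4-1) hσ hθ ha hb hA' hz1
    have hB2 := hasDerivAt_block (c := α/4-1/2) hσ hθ ha hb hA' hz2
    have hB3 := hasDerivAt_block (c := α/4-3/2) hσ hθ ha hb hA' hz2
    have t1 := ((hσ.const_mul (α/2)).mul hd).mul hB1
    have t2 := ((hθ.const_mul (8*α)).mul_const (DT j g)).mul hB1
    have t3 := hB2.const_mul (4 * DT j g)
    have t4 := (((hσ.const_mul 4).mul hθ).mul hd).mul hB3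
    have t5 := (((hθ.pow 2).const_mul 64).mul_const (DT j g)).mul hB3
    have total := (((t1.add t2).add t3).sub t4).sub t5
    refine total.congr_deriv ?_
    simp only [Ffun, blkD, blk, Af, tH]
    push_cast
    simp only [Pi.mul_apply, Pi.pow_apply, Pi.add_apply, Pi.sub_apply, show (2:ℕ) - 1 = 1 from rfl, pow_one]
    ring


lemma Sf_pos {g : Hpt n} (hg : ¬(g.1 = 0 ∧ g.2.1 = 0)) : 0 < Sf g := by
  have n1 := sqn_nonneg g.1
  have n2 := sqn_nonneg g.2.1
  have h0 : 0 ≤ Sf g := by unfold Sf; linarith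
  rcases lt_or_eq_of_le h0 with h | h
  · exact h
  · exfalso
    apply hg
    have e1 : sqn g.1 = 0 := by unfold Sf at h; linarith
    have e2 : sqn g.2.1 = 0 := by unfold Sf at h; linarith
    exact ⟨sqn_eq_zero e1, sqn_eq_zero e2⟩


end Stmt4Aux

open Stmt4Aux

set_option maxHeartbeats 4000000 in
/-- with `τ = 4t/N²`, `ψ = (|x|²+|y|²)/N²` and `v = N^α u(τ)`, away from the
`t`-axis complement condition `(x,y) ≠ 0` one has
`ℒ₀v = 4 ψ N^(α-2) [(1-τ²)u'' - (n+1)τ u' + α(α+2n)/4 u]`. -/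
theorem stmt_4 (n : ℕ) (hn : 1 ≤ n) (α : ℝ) (hα : 0 < α) (u : ℝ → ℝ) (hu : ContDiff ℝ 2 u)
    (g : Hpt n) (hg : ¬(g.1 = 0 ∧ g.2.1 = 0))
    (τ : ℝ) (hτ : τ = 4 * g.2.2 / (gaugeN g) ^ 2) :
    subLap (fun h => gaugeN h ^ α * u (4 * h.2.2 / (gaugeN h) ^ 2)) g
      = 4 * ((sqn g.1 + sqn g.2.1) / (gaugeN g) ^ 2) * gaugeN g ^ (α - 2) *
        ((1 - τ ^ 2) * deriv (deriv u) τ - ((n:ℝ) + 1) * τ * deriv u τ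
          + (α * (α + 2*(n:ℝ)) / 4) * u τ) := by
  subst hτ
  have hu0 : Differentiable ℝ u := hu.differentiable (by norm_num)
  have hu1 : Differentiable ℝ (deriv u) := by
    have hu' : ContDiff ℝ ((1:ℕ∞) + 1) u := by
      exact_mod_cast hu
    exact (contDiff_succ_iff_deriv.mp hu').2.2.differentiable (by norm_num)
  have hS : 0 < Sf g := Sf_pos hg
  have hA : 0 < Af g := Af_pos hS
  -- rewrite the function
  have hvfun : (fun h : Hpt n => gaugeN h ^ α * u (4 * h.2.2 / (gaugeN h) ^ 2))
      = fun h => Af h ^ (α/4) * u (tH h) := funext fun h => v_eq α u h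
  rw [hvfun]
  -- second derivatives
  have hstep : ∀ j : Fin n ⊕ Fin n,
      Xd j (Xd j (fun h : Hpt n => Af h ^ (α/4) * u (tH h))) g
        = Ffun α u g (DS j g) (DT j g) := by
    intro j
    have hUopen : IsOpen {h : Hpt n | 0 < Sf h} :=
      isOpen_lt continuous_const diff_Sf.continuous
    have hev : Xd j (fun h : Hpt n => Af h ^ (α/4) * u (tH h)) =ᶠ[nhds g] Ef α u j := by
      filter_upwards [hUopen.mem_nhds hS] with h hh
      exact stage1 α u hu0 j h hh
    show fderiv ℝ (Xd j (fun h : Hpt n => Af h ^ (α/4) * u (tH h))) g (Xvec j g) = _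
    rw [hev.fderiv_eq]
    exact stage2 α u hu0 hu1 j g hS
  unfold subLap
  simp only [hstep]
  rw [Fintype.sum_sum_type]
  simp only [DS, DT]
  rw [← Finset.sum_add_distrib]
  have pair : ∀ a b : ℝ,
      Ffun α u g (2*a) (-b/2) + Ffun α u g (2*b) (a/2)
        = 2 * Ffun α u g 0 0
          + (Ffun α u g 2 0 + Ffun α u g 0 (1/2) - 2 * Ffun α u g 0 0) * (a^2+b^2) := by
    intro a b
    simp only [Ffun, blkD]
    ring
  simp_rw [pair]
  rw [Finset.sum_add_distrib, Finset.sum_const, ← Finset.mul_sum]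
  have hsum : ∑ i : Fin n, ((g.1 i)^2 + (g.2.1 i)^2) = Sf g := by
    unfold Sf sqn
    rw [Finset.sum_add_distrib]
  rw [hsum]
  simp only [Finset.card_univ, Fintype.card_fin, nsmul_eq_mul]
  rw [arg_eq, gauge_sq, gauge_rpow (α-2), show sqn g.1 + sqn g.2.1 = Sf g from rfl]
  simp only [Ffun, blkD, blk]
  have q : ∀ (k : ℕ), Af g ^ (α/4 - (k:ℝ)/2) = Af g ^ (α/4:ℝ) * (Af g ^ (-(1:ℝ)/2))^k := by
    intro k
    rw [← Real.rpow_natCast (Af g ^ (-(1:ℝ)/2)) k, ← Real.rpow_mul hA.le, ← Real.rpow_add hA]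
    congr 1; push_cast; ring
  have R1 : Af g ^ (α/4-1 : ℝ) = Af g ^ (α/4:ℝ) * (Af g ^ (-(1:ℝ)/2))^2 := by
    rw [show (α/4-1:ℝ) = α/4 - ((2:ℕ):ℝ)/2 by push_cast; ring]; exact q 2
  have R2 : Af g ^ (α/4-1-1 : ℝ) = Af g ^ (α/4:ℝ) * (Af g ^ (-(1:ℝ)/2))^4 := by
    rw [show (α/4-1-1:ℝ) = α/4 - ((4:ℕ):ℝ)/2 by push_cast; ring]; exact q 4
  have R3 : Af g ^ (α/4-1/2 : ℝ) = Af g ^ (α/4:ℝ) * (Af g ^ (-(1:ℝ)/2))^1 := by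
    rw [show (α/4-1/2:ℝ) = α/4 - ((1:ℕ):ℝ)/2 by push_cast; ring]; exact q 1
  have R4 : Af g ^ (α/4-1/2-1 : ℝ) = Af g ^ (α/4:ℝ) * (Af g ^ (-(1:ℝ)/2))^3 := by
    rw [show (α/4-1/2-1:ℝ) = α/4 - ((3:ℕ):ℝ)/2 by push_cast; ring]; exact q 3
  have R5 : Af g ^ (α/4-3/2 : ℝ) = Af g ^ (α/4:ℝ) * (Af g ^ (-(1:ℝ)/2))^3 := by
    rw [show (α/4-3/2:ℝ) = α/4 - ((3:ℕ):ℝ)/2 by push_cast; ring]; exact q 3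
  have R6 : Af g ^ (α/4-3/2-1 : ℝ) = Af g ^ (α/4:ℝ) * (Af g ^ (-(1:ℝ)/2))^5 := by
    rw [show (α/4-3/2-1:ℝ) = α/4 - ((5:ℕ):ℝ)/2 by push_cast; ring]; exact q 5
  have R9 : Af g ^ ((α-2)/4 : ℝ) = Af g ^ (α/4:ℝ) * (Af g ^ (-(1:ℝ)/2))^1 := by
    rw [show ((α-2)/4:ℝ) = α/4 - ((1:ℕ):ℝ)/2 by push_cast; ring]; exact q 1
  have r8 : Af g ^ (-(1:ℝ)/2-1) = (Af g ^ (-(1:ℝ)/2))^3 := by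
    rw [← Real.rpow_natCast (Af g ^ (-(1:ℝ)/2)) 3, ← Real.rpow_mul hA.le]
    congr 1; norm_num
  have hdiv : Sf g / Af g ^ ((1:ℝ)/2) = Sf g * Af g ^ (-(1:ℝ)/2) := by
    rw [div_eq_mul_inv]
    congr 1
    rw [show (-(1:ℝ)/2) = -((1:ℝ)/2) by norm_num, Real.rpow_neg hA.le]
  have hrel : (Sf g ^ 2 + 16 * g.2.2 ^ 2) * (Af g ^ (-(1:ℝ)/2))^2 = 1 := by
    rw [← Real.rpow_natCast (Af g ^ (-(1:ℝ)/2)) 2, ← Real.rpow_mul hA.le,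
      show (-(1:ℝ)/2*((2:ℕ):ℝ) : ℝ) = -1 by push_cast; ring, Real.rpow_neg_one]
    exact mul_inv_cancel₀ hA.ne'
  rw [R2, R6, R4, R5, R1, r8, R9, R3, hdiv, show tH g = 4 * g.2.2 * Af g ^ (-(1:ℝ)/2) from rfl]
  set s := Sf g with hsdef
  set t := g.2.2 with htdef
  set B := Af g ^ (α/4:ℝ) with hBdef
  set D := Af g ^ (-(1:ℝ)/2) with hDdef
  linear_combination ((α^2 - 4*α)*s*B*D^2*u (4*t*D)
    + (48 - 16*α)*s*t*B*D^3*deriv u (4*t*D)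
    + 64*s*t^2*B*D^4*deriv (deriv u) (4*t*D)) * hrel
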